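/- If the Lyndon factorization of a binary string w is λ_1^{p_1}, …, λ_m^{p_m}, then the Lyndon factorization of φ(w) is φ(λ_1)^{p_1}, …, φ(λ_m)^{p_m}, where φ(a) = aab, φ(b) = ab. -/

import Mathlib

/-- Strings over the binary alphabet `{a, b}`: `false` is `a`, `true` is `b`. -/
abbrev Word := List Bool

/-- `w` is primitive if it is not of the form `x^j` for any `j ≥ 2`. -/
def Primitive (w : Word) : Prop := ¬ ∃ (x : Word) (j : ℕ), 2 ≤ j ∧ w = (List.replicate j x).flatten

/-- `u` occurs in `w` at (0-indexed) position `i`. -/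
def occursAt (u w : Word) (i : ℕ) : Prop :=
  i + u.length ≤ w.length ∧ (w.drop i).take u.length = u

instance (u w : Word) (i : ℕ) : Decidable (occursAt u w i) := by
  unfold occursAt; infer_instance

/-- Fibonacci words: `F 1 = b`, `F 2 = a`, `F (k+1) = F k ++ F (k-1)`. -/
def F : ℕ → Word
  | 0 => []
  | 1 => [true]
  | 2 => [false]
  | (n+3) => F (n+2) ++ F (n+1)

/-- Fibonacci numbers with `f 1 = f 2 = 1`. -/
def f : ℕ → ℕ
  | 0 => 0
  | 1 => 1
  | (n+2) => f (n+1) + f n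

/-- The morphism `φ(a) = aab`, `φ(b) = ab`. -/
def phi (w : Word) : Word := w.flatMap fun c => if c then [false, true] else [false, false, true]

/-- Lexicographic order on words induced by `a < b` (a proper prefix is smaller). -/
def wlt (x y : Word) : Prop := List.Lex (· < ·) x y

/-- `u` is a border of `w`: a proper substring that is both a prefix and a suffix. -/
def IsBorder (u w : Word) : Prop := u ≠ w ∧ u <+: w ∧ u <:+ w

/-- `w` is a Lyndon word: it is smaller than all of its proper nonempty suffixes. -/
def IsLyndon (w : Word) : Prop := ∀ s : Word, s <:+ w → s ≠ [] → s ≠ w → wlt w s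

/-- `fs` is the Lyndon factorization of `w`: a factorization into nonempty Lyndon
words that is lexicographically non-increasing (powers written as repetitions). -/
def IsLyndonFactorization (w : Word) (fs : List Word) : Prop :=
  fs.flatten = w ∧ (∀ x ∈ fs, IsLyndon x ∧ x ≠ []) ∧ List.Chain' (fun x y => ¬ wlt x y) fs

/-- `ℓ 1 = ab`, `ℓ (k+1) = φ (ℓ k)`. -/
def ell : ℕ → Word
  | 0 => []
  | 1 => [false, true]
  | (n+2) => phi (ell (n+1))

lemma phi_append (u v : Word) : phi (u ++ v) = phi u ++ phi v := by
  simp [phi]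

lemma phi_cons_false (u : Word) : phi (false :: u) = false :: false :: true :: phi u := by
  simp [phi]

lemma phi_cons_true (u : Word) : phi (true :: u) = false :: true :: phi u := by
  simp [phi]

lemma phi_nil : phi [] = [] := rfl

lemma phi_ne_nil {u : Word} (h : u ≠ []) : phi u ≠ [] := by
  cases u with
  | nil => exact absurd rfl h
  | cons c u => cases c <;> simp [phi_cons_false, phi_cons_true]

lemma wlt_append_left {x y : Word} (p : Word) (h : wlt x y) : wlt (p ++ x) (p ++ y) := by
  induction p with
  | nil => exact h
  | cons a p ih => exact List.Lex.cons ih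

lemma wlt_asymm {x y : Word} (h : wlt x y) : ¬ wlt y x :=
  (List.Lex.asymm (α := Bool) (· < ·)).asymm x y h

lemma wlt_irrefl (l : Word) : ¬ wlt l l := fun h => wlt_asymm h h

lemma wlt_trans {x y z : Word} (h1 : wlt x y) (h2 : wlt y z) : wlt x z := by
  have : IsTrans Word (List.Lex (· < · : Bool → Bool → Prop)) :=
    ⟨fun _ _ _ => List.lex_trans lt_trans⟩
  exact this.trans x y z h1 h2

lemma wlt_trichotomy (x y : Word) : wlt x y ∨ x = y ∨ wlt y x :=
  trichotomous_of (List.Lex (α := Bool) (· < ·)) x y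

/-- φ is strictly monotone for lex order. -/
lemma phi_mono {x y : Word} (h : wlt x y) : wlt (phi x) (phi y) := by
  induction h with
  | nil =>
      rename_i b l
      cases b
      · rw [phi_cons_false]; exact List.Lex.nil
      · rw [phi_cons_true]; exact List.Lex.nil
  | @rel a l₁ b l₂ hab =>
      cases a <;> cases b <;> try exact absurd hab (by decide)
      rw [phi_cons_false, phi_cons_true]
      exact List.Lex.cons (List.Lex.rel (by decide))
  | @cons a l₁ l₂ _ ih =>
      cases a
      · rw [phi_cons_false, phi_cons_false]
        exact wlt_append_left [false, false, true] ih
      · rw [phi_cons_true, phi_cons_true]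
        exact wlt_append_left [false, true] ih

/-- Classification of suffixes of `phi w`. -/
lemma suffix_phi {s w : Word} (hs : s <:+ phi w) :
    (∃ t, t <:+ w ∧ s = phi t) ∨
    (∃ t, t <:+ w ∧ s = true :: phi t) ∨
    (∃ t, (false :: t) <:+ w ∧ s = false :: true :: phi t) := by
  induction w with
  | nil =>
      left
      exact ⟨[], List.nil_suffix, by simpa [phi_nil] using List.suffix_nil.mp hs⟩
  | cons c w ih =>
      have step : ∀ {t : Word}, t <:+ w → t <:+ c :: w := fun h => h.trans (List.suffix_cons c w)
      cases c with
      | false =>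
          rw [phi_cons_false] at hs
          rcases List.suffix_cons_iff.mp hs with h | hs
          · left; exact ⟨false :: w, List.suffix_refl _, by rw [h, phi_cons_false]⟩
          rcases List.suffix_cons_iff.mp hs with h | hs
          · right; right; exact ⟨w, List.suffix_refl _, h⟩
          rcases List.suffix_cons_iff.mp hs with h | hs
          · right; left; exact ⟨w, List.suffix_cons _ _, h⟩
          · rcases ih hs with ⟨t, ht, rfl⟩ | ⟨t, ht, rfl⟩ | ⟨t, ht, rfl⟩
            · exact Or.inl ⟨t, step ht, rfl⟩
            · exact Or.inr (Or.inl ⟨t, step ht, rfl⟩)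
            · exact Or.inr (Or.inr ⟨t, step ht, rfl⟩)
      | true =>
          rw [phi_cons_true] at hs
          rcases List.suffix_cons_iff.mp hs with h | hs
          · left; exact ⟨true :: w, List.suffix_refl _, by rw [h, phi_cons_true]⟩
          rcases List.suffix_cons_iff.mp hs with h | hs
          · right; left; exact ⟨w, List.suffix_cons _ _, h⟩
          · rcases ih hs with ⟨t, ht, rfl⟩ | ⟨t, ht, rfl⟩ | ⟨t, ht, rfl⟩
            · exact Or.inl ⟨t, step ht, rfl⟩
            · exact Or.inr (Or.inl ⟨t, step ht, rfl⟩)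
            · exact Or.inr (Or.inr ⟨t, step ht, rfl⟩)

lemma phi_head_false {w : Word} (hw : w ≠ []) :
    ∃ r, phi w = false :: r := by
  cases w with
  | nil => exact absurd rfl hw
  | cons c w =>
      cases c
      · rw [phi_cons_false]; exact ⟨_, rfl⟩
      · rw [phi_cons_true]; exact ⟨_, rfl⟩

/-- φ preserves Lyndon words. -/
lemma phi_lyndon {w : Word} (hw : w ≠ []) (hL : IsLyndon w) : IsLyndon (phi w) := by
  intro s hs hne hnew
  rcases suffix_phi hs with ⟨t, ht, rfl⟩ | ⟨t, ht, rfl⟩ | ⟨t, ht, rfl⟩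
  · -- s = phi t
    have htn : t ≠ [] := by rintro rfl; exact hne rfl
    have htw : t ≠ w := by rintro rfl; exact hnew rfl
    exact phi_mono (hL t ht htn htw)
  · -- s = true :: phi t
    obtain ⟨r, hr⟩ := phi_head_false hw
    rw [hr]
    exact List.Lex.rel (by decide)
  · -- s = false :: true :: phi t, with false :: t <:+ w
    by_cases hcase : false :: t = w
    · subst hcase
      rw [phi_cons_false]
      exact List.Lex.cons (List.Lex.rel (by decide))
    · have h1 : wlt w (false :: t) := hL _ ht (by simp) hcase
      have h2 : wlt (phi w) (phi (false :: t)) := phi_mono h1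
      have h3 : wlt (phi (false :: t)) (false :: true :: phi t) := by
        rw [phi_cons_false]
        exact List.Lex.cons (List.Lex.rel (by decide))
      exact wlt_trans h2 h3

/-- If `fs` is the Lyndon factorization of `w`, then `fs.map phi` is the
Lyndon factorization of `φ(w)`. -/
theorem stmt9 (w : Word) (fs : List Word) (h : IsLyndonFactorization w fs) :
    IsLyndonFactorization (phi w) (fs.map phi) := by
  obtain ⟨hflat, hly, hchain⟩ := h
  refine ⟨?_, ?_, ?_⟩
  · rw [← hflat]
    clear hflat hly hchain
    induction fs with
    | nil => rfl
    | cons x fs ih => simp [phi_append, ih]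
  · intro x hx
    rcases List.mem_map.mp hx with ⟨y, hy, rfl⟩
    obtain ⟨hyL, hyn⟩ := hly y hy
    exact ⟨phi_lyndon hyn hyL, phi_ne_nil hyn⟩
  · refine List.isChain_map_of_isChain phi ?_ hchain
    intro a b hab hcon
    rcases wlt_trichotomy a b with h1 | rfl | h1
    · exact hab h1
    · exact wlt_irrefl _ hcon
    · exact wlt_asymm (phi_mono h1) hcon
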